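/- The solution graph of the 4-variable formula φ = (x₁∨¬x₂∨¬x₃)∧(x₂∨¬x₃∨¬x₄)∧(x₃∨¬x₄∨¬x₁)∧(x₄∨¬x₁∨¬x₂) is disconnected, but for each of the four 3-element subsets of the variables, the projection of the solution set onto that subset has a connected solution graph. -/

import Mathlib

def Reach {ι : Type*} [Fintype ι] (S : Set (ι → Bool)) : (ι → Bool) → (ι → Bool) → Prop :=
  Relation.ReflTransGen (fun u v => u ∈ S ∧ v ∈ S ∧ hammingDist u v = 1)

def Connected {ι : Type*} [Fintype ι] (S : Set (ι → Bool)) : Prop :=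
  ∀ a ∈ S, ∀ b ∈ S, Reach S a b

def S0 : Set (Fin 4 → Bool) := {s |
  ((s 0 || !s 1 || !s 2) && (s 1 || !s 2 || !s 3) &&
   (s 2 || !s 3 || !s 0) && (s 3 || !s 0 || !s 1)) = true}

instance : DecidablePred (· ∈ S0) := fun _ => inferInstanceAs (Decidable (_ = true))

def P0 (j : Fin 4) : Set (Fin 3 → Bool) := {p | ∃ s ∈ S0, ∀ k : Fin 3, p k = s (j.succAbove k)}

instance (j : Fin 4) : DecidablePred (· ∈ P0 j) := fun p =>
  inferInstanceAs (Decidable (∃ s : Fin 4 → Bool, s ∈ S0 ∧ ∀ k : Fin 3, p k = s (j.succAbove k)))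

lemma reach_symm {ι : Type*} [Fintype ι] (S : Set (ι → Bool)) : Symmetric (Reach S) :=
  (@Relation.ReflTransGen.symmetric _ _ ⟨fun _ _ h => ⟨h.2.1, h.1, by rw [hammingDist_comm]; exact h.2.2⟩⟩).symm

lemma conn_to_hub {ι : Type*} [Fintype ι] (S : Set (ι → Bool)) (hub : ι → Bool)
    (H : ∀ v ∈ S, v ≠ hub → ∃ w ∈ S, hammingDist v w = 1 ∧ hammingDist w hub < hammingDist v hub) :
    ∀ a ∈ S, Reach S a hub := by
  have key : ∀ n : ℕ, ∀ a ∈ S, hammingDist a hub ≤ n → Reach S a hub := by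
    intro n
    induction n with
    | zero =>
      intro a ha h
      have : a = hub := by rwa [Nat.le_zero, hammingDist_eq_zero] at h
      subst this; exact Relation.ReflTransGen.refl
    | succ n ih =>
      intro a ha h
      by_cases he : a = hub
      · subst he; exact Relation.ReflTransGen.refl
      · obtain ⟨w, hw, hd, hlt⟩ := H a ha he
        exact Relation.ReflTransGen.head ⟨ha, hw, hd⟩ (ih w hw (by omega))
  exact fun a ha => key _ a ha le_rfl

lemma conn_of_hub {ι : Type*} [Fintype ι] (S : Set (ι → Bool)) (hub : ι → Bool)
    (H : ∀ a ∈ S, Reach S a hub) : Connected S :=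
  fun a ha b hb => (H a ha).trans (reach_symm S (H b hb))

lemma no_ones_neighbor :
    ∀ u : Fin 4 → Bool, u ∈ S0 → hammingDist u (fun _ => true) ≠ 1 := by decide

lemma no_reach_ones : ∀ b, Reach S0 (fun _ => false) b → b ≠ (fun _ => true) := by
  intro b hb
  induction hb with
  | refl => decide
  | tail _ h _ =>
    obtain ⟨hu, _, hd⟩ := h
    intro hev
    subst hev
    exact no_ones_neighbor _ hu hd

theorem four_clause_formula_disconnected_but_all_three_var_projections_connected :
    -- variables (x₁,x₂,x₃,x₄) = (s 0, s 1, s 2, s 3)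
    let S : Set (Fin 4 → Bool) := {s |
      ((s 0 || !s 1 || !s 2) && (s 1 || !s 2 || !s 3) &&
       (s 2 || !s 3 || !s 0) && (s 3 || !s 0 || !s 1)) = true}
    -- projection dropping the j-th variable (keeping the other three, in order)
    let P : Fin 4 → Set (Fin 3 → Bool) :=
      fun j => {p | ∃ s ∈ S, ∀ k : Fin 3, p k = s (j.succAbove k)}
    ¬ Connected S ∧ ∀ j : Fin 4, Connected (P j) := by
  intro S P
  have hS : S = S0 := rfl
  have hP : ∀ j, P j = P0 j := fun _ => rfl
  constructor
  · rw [hS]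
    intro h
    have h0 : (fun _ : Fin 4 => false) ∈ S0 := by decide
    have h1 : (fun _ : Fin 4 => true) ∈ S0 := by decide
    exact no_reach_ones _ (h _ h0 _ h1) rfl
  · intro j
    rw [hP j]
    refine conn_of_hub _ (fun _ => false) (conn_to_hub _ _ ?_)
    fin_cases j <;> decide
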